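/- Let X be a compact uniform space and f_{0,∞} a sequence of continuous self-maps of X converging uniformly to a continuous map f. Then h(f_{0,∞}) ≤ h(f_{1,∞}) ≤ ⋯ ≤ h(f_{n,∞}) ≤ ⋯ ≤ h*(f_∞) ≤ h(f), where h*(f_∞) = lim_{n→∞} h(f_{n,∞}) is the asymptotical topological entropy. -/

import Mathlib

open Filter Set
open scoped Uniformity
open scoped SetRel

/-- `itr f i n = f (i+n-1) ∘ ⋯ ∘ f i`, the composition of `n` maps of the sequence `f`
starting at index `i` (so `itr f i 0 = id`). -/
def itr {X : Type*} (f : ℕ → X → X) (i : ℕ) : ℕ → X → X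
  | 0 => id
  | n + 1 => fun x => f (i + n) (itr f i n x)

/-- `E` is an `(n,γ)`-separated set for the nonautonomous system `f`. -/
def IsSep {X : Type*} (f : ℕ → X → X) (n : ℕ) (γ : Set (X × X)) (E : Set X) : Prop :=
  ∀ x ∈ E, ∀ y ∈ E, x ≠ y → ∃ j < n, (itr f 0 j x, itr f 0 j y) ∉ γ

/-- `F` `(n,γ)`-spans the set `K` for the nonautonomous system `f`. -/
def Spans {X : Type*} (f : ℕ → X → X) (n : ℕ) (γ : Set (X × X)) (F K : Set X) : Prop :=
  ∀ x ∈ K, ∃ y ∈ F, ∀ j < n, (itr f 0 j x, itr f 0 j y) ∈ γ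

/-- Maximal cardinality of an `(n,γ)`-separated subset of `Λ`. -/
noncomputable def sepCard {X : Type*} (f : ℕ → X → X) (Λ : Set X) (n : ℕ)
    (γ : Set (X × X)) : ℕ :=
  sSup {m | ∃ E : Finset X, ↑E ⊆ Λ ∧ IsSep f n γ ↑E ∧ E.card = m}

/-- Minimal cardinality of a subset of `Λ` that `(n,γ)`-spans `Λ`. -/
noncomputable def spanCard {X : Type*} (f : ℕ → X → X) (Λ : Set X) (n : ℕ)
    (γ : Set (X × X)) : ℕ :=
  sInf {m | ∃ F : Finset X, ↑F ⊆ Λ ∧ Spans f n γ ↑F Λ ∧ F.card = m}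


/-- Topological entropy of the nonautonomous system `f` on the set `Λ`, defined via
separated sets; by antitonicity in the entourage, the supremum over all entourages agrees
with the limit along the net of symmetric open entourages used in the paper. -/
noncomputable def entropy {X : Type*} [UniformSpace X] (f : ℕ → X → X) (Λ : Set X) : EReal :=
  ⨆ γ ∈ 𝓤 X, atTop.limsup fun n : ℕ =>
    ((Real.log (sepCard f Λ n γ) / n : ℝ) : EReal)

section Aux
variable {X : Type*}

lemma itr_add (f : ℕ → X → X) (i a b : ℕ) (x : X) :
    itr f i (a + b) x = itr f (i + a) b (itr f i a x) := by
  induction b with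
  | zero => rfl
  | succ b ih => show f (i + (a + b)) (itr f i (a+b) x) = f (i + a + b) (itr f (i+a) b _)
                 rw [ih, add_assoc]

lemma itr_shift (f : ℕ → X → X) (m i j : ℕ) :
    itr (fun k => f (m + k)) i j = itr f (m + i) j := by
  induction j with
  | zero => rfl
  | succ j ih =>
      funext x
      show f (m + (i + j)) (itr (fun k => f (m+k)) i j x) = f (m + i + j) (itr f (m+i) j x)
      rw [ih, add_assoc]

lemma itr_const (F : X → X) (i j : ℕ) (x : X) :
    itr (fun _ => F) i j x = F^[j] x := by
  induction j with
  | zero => rfl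
  | succ j ih =>
      show F (itr (fun _ => F) i j x) = F^[j+1] x
      rw [ih, Function.iterate_succ_apply']

variable [UniformSpace X] [CompactSpace X]

lemma exists_chi {γ : Set (X × X)} (hγ : γ ∈ 𝓤 X) :
    ∃ (t : Finset X) (χ : X → X), (∀ x, χ x ∈ t) ∧ ∀ x y, χ x = χ y → (x, y) ∈ γ := by
  obtain ⟨η, hη, hsymm, hcomp⟩ := comp_symm_mem_uniformity_sets hγ
  obtain ⟨t, -, ht⟩ := isCompact_univ.elim_nhds_subcover
    (fun c => UniformSpace.ball c η) (fun c _ => UniformSpace.ball_mem_nhds c hη)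
  have hcov : ∀ x : X, ∃ c ∈ t, x ∈ UniformSpace.ball c η := by
    intro x
    have := ht (mem_univ x)
    simpa using this
  choose χ hχt hχball using hcov
  refine ⟨t, χ, hχt, fun x y hxy => ?_⟩
  have hx : (χ x, x) ∈ η := hχball x
  have hy : (χ y, y) ∈ η := hχball y
  rw [hxy] at hx
  exact hcomp ⟨χ y, hsymm.symm _ _ hx, hy⟩

lemma card_le_of_isSep {f : ℕ → X → X} {n : ℕ} {γ : Set (X × X)} {t : Finset X} {χ : X → X}
    (hχt : ∀ x, χ x ∈ t) (hχ : ∀ x y, χ x = χ y → (x, y) ∈ γ)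
    (E : Finset X) (hE : IsSep f n γ ↑E) : E.card ≤ t.card ^ n := by
  classical
  have hinj : Function.Injective
      (fun x : ↥E => (fun q : Fin n => (⟨χ (itr f 0 q (x : X)), hχt _⟩ : ↥t))) := by
    intro x y hxy
    ext
    by_contra hne
    obtain ⟨j, hj, hout⟩ := hE x x.2 y y.2 hne
    exact hout (hχ _ _ (congrArg Subtype.val (congrFun hxy ⟨j, hj⟩)))
  calc E.card = Fintype.card ↥E := (Fintype.card_coe E).symm
    _ ≤ Fintype.card (Fin n → ↥t) := Fintype.card_le_of_injective _ hinj
    _ = t.card ^ n := by simp [Fintype.card_fun]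

lemma sepCard_le {f : ℕ → X → X} {n : ℕ} {γ : Set (X × X)} {t : Finset X} {χ : X → X}
    (hχt : ∀ x, χ x ∈ t) (hχ : ∀ x y, χ x = χ y → (x, y) ∈ γ) :
    sepCard f univ n γ ≤ t.card ^ n := by
  refine csSup_le ⟨0, ∅, by simp, fun x hx => absurd hx (by simp), by simp⟩ ?_
  rintro m ⟨E, -, hE, rfl⟩
  exact card_le_of_isSep hχt hχ E hE

lemma bddAbove_sepSet {f : ℕ → X → X} {n : ℕ} {γ : Set (X × X)} (hγ : γ ∈ 𝓤 X) :
    BddAbove {m | ∃ E : Finset X, ↑E ⊆ (univ : Set X) ∧ IsSep f n γ ↑E ∧ E.card = m} := by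
  obtain ⟨t, χ, hχt, hχ⟩ := exists_chi hγ
  exact ⟨t.card ^ n, by rintro m ⟨E, -, hE, rfl⟩; exact card_le_of_isSep hχt hχ E hE⟩

lemma card_le_sepCard {f : ℕ → X → X} {n : ℕ} {γ : Set (X × X)} (hγ : γ ∈ 𝓤 X)
    {E : Finset X} (hE : IsSep f n γ ↑E) : E.card ≤ sepCard f univ n γ :=
  le_csSup (bddAbove_sepSet hγ) ⟨E, subset_univ _, hE, rfl⟩

lemma one_le_sepCard [Nonempty X] (f : ℕ → X → X) (n : ℕ) {γ : Set (X × X)} (hγ : γ ∈ 𝓤 X) :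
    1 ≤ sepCard f univ n γ := by
  obtain ⟨x⟩ := ‹Nonempty X›
  have : IsSep f n γ ↑({x} : Finset X) := by
    intro a ha b hb hab
    simp only [Finset.coe_singleton, mem_singleton_iff] at ha hb
    exact absurd (ha.trans hb.symm) hab
  simpa using card_le_sepCard hγ this

lemma sepCard_of_isEmpty [IsEmpty X] (f : ℕ → X → X) (Λ : Set X) (n : ℕ) (γ : Set (X × X)) :
    sepCard f Λ n γ = 0 := by
  have : {m | ∃ E : Finset X, ↑E ⊆ Λ ∧ IsSep f n γ ↑E ∧ E.card = m} = {0} := by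
    ext m
    constructor
    · rintro ⟨E, -, -, rfl⟩
      simp [Finset.eq_empty_of_isEmpty E]
    · rintro rfl
      exact ⟨∅, by simp, fun x hx => absurd hx (by simp), by simp⟩
  rw [sepCard, this, csSup_singleton]

end Aux

section Aux2
variable {X : Type*}

lemma ereal_le_of_forall_add {x y : EReal} (hy : 0 ≤ y)
    (h : ∀ ε : ℝ, 0 < ε → x ≤ y + (ε : EReal)) : x ≤ y := by
  induction y using EReal.rec with
  | bot => exact absurd (le_bot_iff.mp hy) (by simp)
  | top => exact le_top
  | coe r =>
    induction x using EReal.rec with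
    | bot => exact bot_le
    | top =>
      have := h 1 one_pos
      rw [← EReal.coe_add] at this
      exact absurd (top_le_iff.mp this) (EReal.coe_ne_top _)
    | coe s =>
      refine EReal.coe_le_coe_iff.mpr (le_of_forall_pos_le_add fun ε hε => ?_)
      have := h ε hε
      rw [← EReal.coe_add] at this
      exact EReal.coe_le_coe_iff.mp this

variable [UniformSpace X] [CompactSpace X]

lemma sep_step {f : ℕ → X → X} {γ : Set (X × X)} (hγ : γ ∈ 𝓤 X)
    {t : Finset X} {χ : X → X} (hχt : ∀ x, χ x ∈ t) (hχ : ∀ x y, χ x = χ y → (x, y) ∈ γ)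
    (k : ℕ) :
    sepCard f univ (k + 1) γ ≤ t.card * sepCard (fun j => f (1 + j)) univ k γ := by
  classical
  refine csSup_le ⟨0, ∅, by simp, fun x hx => absurd hx (by simp), by simp⟩ ?_
  rintro m ⟨E, -, hE, rfl⟩
  set s := sepCard (fun j => f (1 + j)) univ k γ with hs
  rw [Finset.card_eq_sum_card_fiberwise (fun x _ => hχt x)]
  have key : ∀ c ∈ t, (E.filter fun x => χ x = c).card ≤ s := by
    intro c hc
    set Ec := E.filter fun x => χ x = c with hEc
    have hmemEc : ∀ x ∈ Ec, x ∈ E ∧ χ x = c := by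
      intro x hx; simpa [hEc] using hx
    have hstep : ∀ x ∈ Ec, ∀ y ∈ Ec, x ≠ y → ∃ j < k,
        (itr f 1 j (f 0 x), itr f 1 j (f 0 y)) ∉ γ := by
      intro x hx y hy hxy
      obtain ⟨j, hj, hout⟩ := hE x (hmemEc x hx).1 y (hmemEc y hy).1 hxy
      match j, hj, hout with
      | 0, _, hout =>
        exact absurd (hχ x y ((hmemEc x hx).2.trans (hmemEc y hy).2.symm)) hout
      | (j'+1), hj, hout =>
        refine ⟨j', by omega, ?_⟩
        have hx1 : itr f 0 (j' + 1) x = itr f 1 j' (f 0 x) := by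
          rw [add_comm j' 1]; exact itr_add f 0 1 j' x
        have hy1 : itr f 0 (j' + 1) y = itr f 1 j' (f 0 y) := by
          rw [add_comm j' 1]; exact itr_add f 0 1 j' y
        rwa [hx1, hy1] at hout
    have hinj : Set.InjOn (f 0) ↑Ec := by
      intro x hx y hy hxy
      by_contra hne
      obtain ⟨j, hj, hout⟩ := hstep x (by exact_mod_cast hx) y (by exact_mod_cast hy) hne
      rw [hxy] at hout
      exact hout (refl_mem_uniformity hγ)
    have hsep : IsSep (fun j => f (1 + j)) k γ ↑(Ec.image (f 0)) := by
      intro u hu v hv huv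
      simp only [Finset.coe_image, Set.mem_image, Finset.mem_coe] at hu hv
      obtain ⟨x, hx, rfl⟩ := hu
      obtain ⟨y, hy, rfl⟩ := hv
      have hxy : x ≠ y := fun h => huv (by rw [h])
      obtain ⟨j, hj, hout⟩ := hstep x (by exact_mod_cast hx) y (by exact_mod_cast hy) hxy
      have hrw : itr (fun j => f (1 + j)) 0 j = itr f 1 j := by
        simpa using itr_shift f 1 0 j
      exact ⟨j, hj, by rwa [hrw]⟩
    calc (E.filter fun x => χ x = c).card = (Ec.image (f 0)).card :=
          (Finset.card_image_of_injOn hinj).symm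
      _ ≤ s := card_le_sepCard hγ hsep
  calc ∑ c ∈ t, (E.filter fun x => χ x = c).card ≤ ∑ c ∈ t, s := Finset.sum_le_sum key
    _ = t.card * s := by simp [mul_comm]

end Aux2

section Aux3
open Topology
variable {X : Type*} [UniformSpace X] [CompactSpace X]

lemma limsup_step (f : ℕ → X → X) {γ : Set (X × X)} (hγ : γ ∈ 𝓤 X) :
    (atTop.limsup fun n : ℕ => ((Real.log (sepCard f univ n γ) / n : ℝ) : EReal)) ≤
      atTop.limsup fun n : ℕ =>
        ((Real.log (sepCard (fun k => f (1 + k)) univ n γ) / n : ℝ) : EReal) := by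
  cases isEmpty_or_nonempty X with
  | inl h => simp [sepCard_of_isEmpty]
  | inr h =>
    obtain ⟨t, χ, hχt, hχ⟩ := exists_chi hγ
    set g := (fun k => f (1 + k)) with hg
    set A := fun n : ℕ => ((Real.log (sepCard f univ n γ) / n : ℝ) : EReal) with hA
    set B := fun n : ℕ => ((Real.log (sepCard g univ n γ) / n : ℝ) : EReal) with hB
    have hB0 : ∀ n, (0 : EReal) ≤ B n := by
      intro n
      rw [hB]
      refine EReal.coe_nonneg.mpr (div_nonneg ?_ (Nat.cast_nonneg n))
      exact Real.log_nonneg (by exact_mod_cast one_le_sepCard g n hγ)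
    have hlimB0 : (0 : EReal) ≤ atTop.limsup B :=
      le_trans (le_liminf_of_le (h := Eventually.of_forall hB0)) liminf_le_limsup
    rcases eq_top_or_lt_top (atTop.limsup B) with htop | hlt
    · rw [htop]; exact le_top
    have hbot : atTop.limsup B ≠ ⊥ := fun hb => by simp [hb] at hlimB0
    obtain ⟨r, hr⟩ : ∃ r : ℝ, atTop.limsup B = (r : ℝ) :=
      ⟨(atTop.limsup B).toReal, (EReal.coe_toReal hlt.ne hbot).symm⟩
    refine ereal_le_of_forall_add hlimB0 fun ε hε => ?_
    have hεE : atTop.limsup B < atTop.limsup B + ((ε/2 : ℝ) : EReal) := by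
      rw [hr, ← EReal.coe_add]
      exact_mod_cast (by linarith : r < r + ε/2)
    have hev1 : ∀ᶠ k in atTop, B k < atTop.limsup B + ((ε/2 : ℝ) : EReal) :=
      eventually_lt_of_limsup_lt hεE
    have htend : Tendsto (fun k : ℕ => Real.log t.card / ((k:ℝ)+1)) atTop (𝓝 0) := by
      have h1 := (tendsto_const_div_atTop_nhds_zero_nat (Real.log t.card)).comp
        (tendsto_add_atTop_nat 1)
      simpa [Function.comp_def] using h1
    have hev2 : ∀ᶠ k : ℕ in atTop, Real.log t.card / ((k:ℝ)+1) < ε/2 :=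
      Filter.Tendsto.eventually_lt_const (by linarith : (0:ℝ) < ε/2) htend
    have key : ∀ᶠ k in atTop, A (k+1) ≤ atTop.limsup B + (ε : EReal) := by
      filter_upwards [hev1, hev2, eventually_ge_atTop 1] with k h1 h2 h3
      have hBk : Real.log (sepCard g univ k γ) / k < r + ε/2 := by
        simp only [hB] at h1
        rw [hr, ← EReal.coe_add] at h1
        exact_mod_cast h1
      have hsk1 : (1:ℝ) ≤ (sepCard g univ k γ : ℝ) := by
        exact_mod_cast one_le_sepCard g k hγ
      have hsf1 : (1:ℝ) ≤ (sepCard f univ (k+1) γ : ℝ) := by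
        exact_mod_cast one_le_sepCard f (k+1) hγ
      have hR1 : (1:ℝ) ≤ (t.card : ℝ) := by
        have ht' : t.Nonempty := ⟨χ (Classical.arbitrary X), hχt _⟩
        exact_mod_cast Finset.card_pos.mpr ht'
      have hsf : (sepCard f univ (k+1) γ : ℝ) ≤ (t.card : ℝ) * (sepCard g univ k γ : ℝ) := by
        exact_mod_cast sep_step hγ hχt hχ k
      have hlog : Real.log (sepCard f univ (k+1) γ) ≤
          Real.log t.card + Real.log (sepCard g univ k γ) := by
        rw [← Real.log_mul (by linarith) (by linarith)]
        exact Real.log_le_log (by linarith) hsf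
      have hk1 : (0:ℝ) < (k:ℝ) := by exact_mod_cast h3
      have hk10 : (0:ℝ) < (k:ℝ) + 1 := by linarith
      have hlogg0 : 0 ≤ Real.log (sepCard g univ k γ) := Real.log_nonneg hsk1
      have hreal : Real.log (sepCard f univ (k+1) γ) / (((k:ℕ)+1 : ℕ) : ℝ) ≤ r + ε := by
        have hklift : (((k:ℕ)+1 : ℕ) : ℝ) = (k:ℝ) + 1 := by push_cast; ring
        rw [hklift]
        calc Real.log (sepCard f univ (k+1) γ) / ((k:ℝ)+1)
            ≤ (Real.log t.card + Real.log (sepCard g univ k γ)) / ((k:ℝ)+1) :=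
              div_le_div_of_nonneg_right hlog hk10.le
          _ = Real.log t.card / ((k:ℝ)+1) + Real.log (sepCard g univ k γ) / ((k:ℝ)+1) :=
              add_div _ _ _
          _ ≤ ε/2 + Real.log (sepCard g univ k γ) / (k:ℝ) :=
              add_le_add h2.le (div_le_div_of_nonneg_left hlogg0 hk1 (by linarith))
          _ ≤ ε/2 + (r + ε/2) := by linarith [hBk]
          _ = r + ε := by ring
      calc A (k+1) = ((Real.log (sepCard f univ (k+1) γ) / (((k:ℕ)+1:ℕ) : ℝ) : ℝ) : EReal) := rfl
        _ ≤ ((r + ε : ℝ) : EReal) := EReal.coe_le_coe_iff.mpr hreal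
        _ = atTop.limsup B + (ε : EReal) := by rw [hr, ← EReal.coe_add]
    have hfin : atTop.limsup (fun k => A (k+1)) ≤ atTop.limsup B + (ε : EReal) :=
      limsup_le_of_le (h := key)
    rwa [limsup_nat_add A 1] at hfin

end Aux3

section Aux4
variable {X : Type*} [UniformSpace X] [CompactSpace X]

lemma limsup_shift_mono (f : ℕ → X → X) {γ : Set (X × X)} (hγ : γ ∈ 𝓤 X)
    {p q : ℕ} (hpq : p ≤ q) :
    (atTop.limsup fun n : ℕ =>
        ((Real.log (sepCard (fun k => f (p + k)) univ n γ) / n : ℝ) : EReal)) ≤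
      atTop.limsup fun n : ℕ =>
        ((Real.log (sepCard (fun k => f (q + k)) univ n γ) / n : ℝ) : EReal) := by
  induction q, hpq using Nat.le_induction with
  | base => exact le_refl _
  | succ q hpq ih =>
    refine le_trans ih ?_
    have hstep := limsup_step (fun k => f (q + k)) hγ
    have heq : (fun k => f (q + (1 + k))) = fun k => f (q + 1 + k) := by
      funext k; rw [← add_assoc]
    rwa [heq] at hstep

lemma track (f : ℕ → X → X) (F : X → X) (hF : Continuous F)
    (hconv : ∀ γ ∈ 𝓤 X, ∃ N : ℕ, ∀ n ≥ N, ∀ x : X, (f n x, F x) ∈ γ) (m : ℕ)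
    {η : Set (X × X)} (hη : η ∈ 𝓤 X) :
    ∃ N : ℕ, ∀ t ≥ N, ∀ x : X, ∀ j ≤ m, (itr f t j x, F^[j] x) ∈ η := by
  induction m generalizing η with
  | zero =>
    refine ⟨0, fun t _ x j hj => ?_⟩
    interval_cases j
    exact refl_mem_uniformity hη
  | succ m ih =>
    obtain ⟨η', hη', hcomp⟩ := comp_mem_uniformity_sets hη
    have hFu : UniformContinuous F := CompactSpace.uniformContinuous_of_continuous hF
    have hθ : {p : X × X | (F p.1, F p.2) ∈ η'} ∈ 𝓤 X := hFu hη'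
    obtain ⟨N₁, hN₁⟩ := ih (inter_mem hθ hη)
    obtain ⟨N₂, hN₂⟩ := hconv η' hη'
    refine ⟨max N₁ N₂, fun t ht x j hj => ?_⟩
    have ht₁ : t ≥ N₁ := le_trans (le_max_left _ _) ht
    have ht₂ : t ≥ N₂ := le_trans (le_max_right _ _) ht
    rcases Nat.lt_or_ge j (m+1) with hjm | hjm
    · exact ((hN₁ t ht₁ x j (by omega)).2 : _)
    · have hj' : j = m + 1 := by omega
      subst hj'
      have hw : (itr f t m x, F^[m] x) ∈ {p : X × X | (F p.1, F p.2) ∈ η'} :=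
        (hN₁ t ht₁ x m le_rfl).1
      have h2 : (f (t+m) (itr f t m x), F (itr f t m x)) ∈ η' :=
        hN₂ (t+m) (by omega) _
      have : (itr f t (m+1) x, F (F^[m] x)) ∈ η :=
        hcomp ⟨F (itr f t m x), h2, hw⟩
      rw [Function.iterate_succ_apply']
      exact this

lemma exists_maximal_sep [Nonempty X] (F : X → X) (m : ℕ) {η : Set (X × X)}
    (hη : η ∈ 𝓤 X) (hsymm : SetRel.IsSymm η) :
    ∃ S : Finset X, S.card = sepCard (fun _ : ℕ => F) univ m η ∧
      ∀ w : X, ∃ y ∈ S, ∀ j < m, (F^[j] w, F^[j] y) ∈ η := by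
  classical
  have hmem : sepCard (fun _ : ℕ => F) univ m η ∈ {m' | ∃ E : Finset X,
      ↑E ⊆ (univ : Set X) ∧ IsSep (fun _ : ℕ => F) m η ↑E ∧ E.card = m'} :=
    Nat.sSup_mem ⟨0, ∅, by simp, fun x hx => absurd hx (by simp), by simp⟩
      (bddAbove_sepSet hη)
  obtain ⟨S, -, hsep, hcard⟩ := hmem
  refine ⟨S, hcard, fun w => ?_⟩
  by_contra hno
  push_neg at hno
  have hwS : w ∉ S := by
    intro hw
    obtain ⟨j, hj, hout⟩ := hno w hw
    exact hout (refl_mem_uniformity hη)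
  have hsep' : IsSep (fun _ : ℕ => F) m η ↑(insert w S) := by
    intro x hx y hy hxy
    simp only [Finset.coe_insert, Set.mem_insert_iff, Finset.mem_coe] at hx hy
    rcases hx with rfl | hx
    · rcases hy with rfl | hy
      · exact absurd rfl hxy
      · obtain ⟨j, hj, hout⟩ := hno y hy
        exact ⟨j, hj, by rw [itr_const, itr_const]; exact hout⟩
    · rcases hy with rfl | hy
      · obtain ⟨j, hj, hout⟩ := hno x hx
        refine ⟨j, hj, ?_⟩
        rw [itr_const, itr_const]
        intro hmem'
        exact hout (hsymm.symm _ _ hmem')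
      · exact hsep x (by exact_mod_cast hx) y (by exact_mod_cast hy) hxy
  have hle := card_le_sepCard (f := fun _ : ℕ => F) hη hsep'
  rw [Finset.card_insert_of_notMem hwS] at hle
  omega

end Aux4

section Aux5
open Topology
variable {X : Type*} [UniformSpace X] [CompactSpace X]

lemma sep_le_block (g : ℕ → X → X) (F : X → X) {γ η : Set (X × X)}
    (hsymm : SetRel.IsSymm η) (hcomp : (η ○ η) ○ (η ○ η) ⊆ γ)
    {m : ℕ} (hm : 0 < m) (S : Finset X)
    (hspan : ∀ w : X, ∃ y ∈ S, ∀ j < m, (F^[j] w, F^[j] y) ∈ η)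
    (htrack : ∀ t : ℕ, ∀ x : X, ∀ j < m, (itr g t j x, F^[j] x) ∈ η)
    (n : ℕ) :
    sepCard g univ n γ ≤ S.card ^ ((n + m - 1) / m) := by
  classical
  set Q := (n + m - 1) / m with hQ
  have hnQ : n ≤ Q * m := by
    have h1 := Nat.div_add_mod (n + m - 1) m
    have h2 := Nat.mod_lt (n + m - 1) hm
    rw [← hQ] at h1
    rw [mul_comm]
    omega
  refine csSup_le ⟨0, ∅, by simp, fun x hx => absurd hx (by simp), by simp⟩ ?_
  rintro c ⟨E, -, hE, rfl⟩
  choose lab hlabS hlab using hspan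
  have hinj : Function.Injective (fun x : ↥E => (fun q : Fin Q =>
      (⟨lab (itr g 0 ((q : ℕ) * m) (x : X)), hlabS _⟩ : ↥S))) := by
    intro x y hxy
    ext
    by_contra hne
    obtain ⟨s, hs, hout⟩ := hE x x.2 y y.2 hne
    apply hout
    have hsm : s % m < m := Nat.mod_lt _ hm
    have hq : s / m < Q := by
      rw [Nat.div_lt_iff_lt_mul hm]
      omega
    have hlabeq : lab (itr g 0 (s / m * m) (x : X)) = lab (itr g 0 (s / m * m) (y : X)) :=
      congrArg Subtype.val (congrFun hxy ⟨s / m, hq⟩)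
    have hdec : ∀ z : X, itr g 0 s z = itr g (s / m * m) (s % m) (itr g 0 (s / m * m) z) := by
      intro z
      have h := itr_add g 0 (s / m * m) (s % m) z
      rw [zero_add] at h
      have hs' : s / m * m + s % m = s := by rw [mul_comm]; exact Nat.div_add_mod s m
      conv_lhs => rw [← hs']
      exact h
    have hx4 : (itr g 0 s (x : X), F^[s % m] (lab (itr g 0 (s / m * m) (x : X)))) ∈ η ○ η := by
      refine ⟨F^[s % m] (itr g 0 (s / m * m) (x : X)), ?_, hlab _ _ hsm⟩
      rw [hdec]
      exact htrack _ _ _ hsm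
    have hy4 : (itr g 0 s (y : X), F^[s % m] (lab (itr g 0 (s / m * m) (y : X)))) ∈ η ○ η := by
      refine ⟨F^[s % m] (itr g 0 (s / m * m) (y : X)), ?_, hlab _ _ hsm⟩
      rw [hdec]
      exact htrack _ _ _ hsm
    rw [← hlabeq] at hy4
    refine hcomp ⟨_, hx4, ?_⟩
    obtain ⟨b, hb1, hb2⟩ := hy4
    exact ⟨b, hsymm.symm _ _ hb2, hsymm.symm _ _ hb1⟩
  calc E.card = Fintype.card ↥E := (Fintype.card_coe E).symm
    _ ≤ Fintype.card (Fin Q → ↥S) := Fintype.card_le_of_injective _ hinj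
    _ = S.card ^ Q := by simp [Fintype.card_fun]

lemma limsup_le_block [Nonempty X] (g : ℕ → X → X) (F : X → X) {γ η : Set (X × X)}
    (hγ : γ ∈ 𝓤 X) (hsymm : SetRel.IsSymm η) (hcomp : (η ○ η) ○ (η ○ η) ⊆ γ)
    {m : ℕ} (hm : 0 < m) (S : Finset X) (hS1 : 1 ≤ S.card)
    (hspan : ∀ w : X, ∃ y ∈ S, ∀ j < m, (F^[j] w, F^[j] y) ∈ η)
    (htrack : ∀ t : ℕ, ∀ x : X, ∀ j < m, (itr g t j x, F^[j] x) ∈ η) :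
    (atTop.limsup fun n : ℕ => ((Real.log (sepCard g univ n γ) / n : ℝ) : EReal)) ≤
      ((Real.log S.card / m : ℝ) : EReal) := by
  have hlogS : (0:ℝ) ≤ Real.log S.card := Real.log_nonneg (by exact_mod_cast hS1)
  have hm' : (0:ℝ) < (m:ℝ) := by exact_mod_cast hm
  refine ereal_le_of_forall_add
    (EReal.coe_nonneg.mpr (div_nonneg hlogS hm'.le)) fun ε hε => ?_
  rw [← EReal.coe_add]
  refine limsup_le_of_le (h := ?_)
  have htend : Tendsto (fun n : ℕ => Real.log S.card / n) atTop (𝓝 0) :=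
    tendsto_const_div_atTop_nhds_zero_nat _
  filter_upwards [Filter.Tendsto.eventually_lt_const hε htend, eventually_ge_atTop 1]
    with n h2 h3
  refine EReal.coe_le_coe_iff.mpr ?_
  set Q := (n + m - 1) / m with hQ
  have hsep : (sepCard g univ n γ : ℝ) ≤ ((S.card : ℝ)) ^ Q := by
    exact_mod_cast sep_le_block g F hsymm hcomp hm S hspan htrack n
  have hsep1 : (1:ℝ) ≤ (sepCard g univ n γ : ℝ) := by
    exact_mod_cast one_le_sepCard g n hγ
  have hn' : (0:ℝ) < (n:ℝ) := by exact_mod_cast h3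
  have hlog1 : Real.log (sepCard g univ n γ) ≤ (Q : ℝ) * Real.log S.card := by
    calc Real.log (sepCard g univ n γ) ≤ Real.log ((S.card : ℝ) ^ Q) :=
          Real.log_le_log (by linarith) hsep
      _ = (Q : ℝ) * Real.log S.card := by rw [Real.log_pow]
  have hQle : (Q : ℝ) ≤ (n:ℝ)/(m:ℝ) + 1 := by
    have h4 : Q ≤ n / m + 1 := by
      have h5 : Q ≤ (n + m) / m := Nat.div_le_div_right (by omega)
      rwa [Nat.add_div_right n hm] at h5
    have h9 : ((n / m : ℕ) : ℝ) ≤ (n:ℝ)/(m:ℝ) := Nat.cast_div_le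
    calc (Q:ℝ) ≤ ((n / m + 1 : ℕ) : ℝ) := by exact_mod_cast h4
      _ = ((n/m : ℕ):ℝ) + 1 := by push_cast; ring
      _ ≤ (n:ℝ)/(m:ℝ) + 1 := by linarith
  calc Real.log (sepCard g univ n γ) / (n:ℝ) ≤ (Q:ℝ) * Real.log S.card / (n:ℝ) :=
        div_le_div_of_nonneg_right hlog1 hn'.le
    _ ≤ ((n:ℝ)/(m:ℝ) + 1) * Real.log S.card / (n:ℝ) := by
        apply div_le_div_of_nonneg_right _ hn'.le
        exact mul_le_mul_of_nonneg_right hQle hlogS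
    _ = Real.log S.card / (m:ℝ) + Real.log S.card / (n:ℝ) := by
        field_simp
    _ ≤ Real.log S.card / (m:ℝ) + ε := by linarith

end Aux5

/-- If `f_{0,∞}` converges uniformly to a continuous map `F`, then the entropies of the
shifted systems `f_{n,∞}` are non-decreasing in `n` and are all bounded (hence so is their
limit, the asymptotical entropy `h*(f_∞) = ⨆ n, h(f_{n,∞})`) by the entropy of the
autonomous limit system `(X, F)`. -/
theorem entropy_shift_mono_le_limit {X : Type*} [UniformSpace X] [CompactSpace X]
    (f : ℕ → X → X) (hf : ∀ n, Continuous (f n)) (F : X → X) (hF : Continuous F)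
    (hconv : ∀ γ ∈ 𝓤 X, ∃ N : ℕ, ∀ n ≥ N, ∀ x : X, (f n x, F x) ∈ γ) :
    (∀ n : ℕ, entropy (fun k => f (n + k)) Set.univ ≤
        entropy (fun k => f (n + 1 + k)) Set.univ) ∧
      (⨆ n : ℕ, entropy (fun k => f (n + k)) Set.univ) ≤
        entropy (fun _ : ℕ => F) Set.univ := by
  simp only [entropy]
  constructor
  · intro n
    refine iSup₂_le fun γ hγ => ?_
    refine le_trans (limsup_shift_mono f hγ (le_self_add : n ≤ n + 1))
      (le_iSup₂ (f := fun γ' (_ : γ' ∈ 𝓤 X) => atTop.limsup fun n' : ℕ =>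
        ((Real.log (sepCard (fun k => f (n + 1 + k)) Set.univ n' γ') / n' : ℝ) : EReal)) γ hγ)
  · refine iSup_le fun n => iSup₂_le fun γ hγ => ?_
    obtain ⟨β, hβ, hβs, hβc⟩ := comp_symm_mem_uniformity_sets hγ
    obtain ⟨η, hη, hηs, hηc⟩ := comp_symm_mem_uniformity_sets hβ
    have hcomp4 : (η ○ η) ○ (η ○ η) ⊆ γ := (SetRel.comp_subset_comp hηc hηc).trans hβc
    refine le_trans ?_ (le_iSup₂ (f := fun γ' (_ : γ' ∈ 𝓤 X) => atTop.limsup fun n' : ℕ =>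
      ((Real.log (sepCard (fun _ : ℕ => F) Set.univ n' γ') / n' : ℝ) : EReal)) η hη)
    cases isEmpty_or_nonempty X with
    | inl hX => simp [sepCard_of_isEmpty]
    | inr hX =>
      have hev : ∀ᶠ m in atTop,
          (atTop.limsup fun n' : ℕ =>
            ((Real.log (sepCard (fun k => f (n + k)) Set.univ n' γ) / n' : ℝ) : EReal)) ≤
          ((Real.log (sepCard (fun _ : ℕ => F) Set.univ m η) / m : ℝ) : EReal) := by
        filter_upwards [eventually_ge_atTop 1] with m hm1
        have hm : 0 < m := hm1
        obtain ⟨S, hScard, hSspan⟩ := exists_maximal_sep F m hη hηs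
        obtain ⟨N₀, hN₀⟩ := track f F hF hconv m hη
        set N := max n N₀ with hN
        have htrack : ∀ t : ℕ, ∀ x : X, ∀ j < m,
            (itr (fun k => f (N + k)) t j x, F^[j] x) ∈ η := by
          intro t x j hj
          rw [itr_shift f N t j]
          exact hN₀ (N + t) ((le_max_right n N₀).trans (Nat.le_add_right N t)) x j hj.le
        have hS1 : 1 ≤ S.card := hScard ▸ one_le_sepCard _ m hη
        refine le_trans (limsup_shift_mono f hγ (le_max_left n N₀)) ?_
        have hblock := limsup_le_block (fun k => f (N + k)) F hγ hηs hcomp4 hm S hS1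
          hSspan htrack
        rwa [hScard] at hblock
      exact le_trans (le_liminf_of_le (h := hev)) liminf_le_limsup
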